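/- There exists an integer N₀ such that for all integers N ≥ N₀ the following holds: every real number s with 0 < s ≤ (1/(N−2))·(−1/2 + √(1/4 + 2(N−2))) is N-good. -/
import Mathlib


open Real Finset

/-- I_s = [(π−s)/2, (π+s)/2]. -/
noncomputable def Iset (s : ℝ) : Set ℝ := Set.Icc ((Real.pi - s) / 2) ((Real.pi + s) / 2)

/-- F(x₁,…,x_{2r}) = Σ_{m=1}^{r} cos(a_m)cos(b_m)·∏_{ℓ=1}^{m−1} sin(a_ℓ)sin(b_ℓ),
where a_m = x_{2m−1}, b_m = x_{2m}. -/
noncomputable def Fangle (a b : ℕ → ℝ) (r : ℕ) : ℝ :=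
  ∑ m ∈ Finset.Icc 1 r, Real.cos (a m) * Real.cos (b m) *
    ∏ l ∈ Finset.Icc 1 (m - 1), (Real.sin (a l) * Real.sin (b l))

/-- X(x₁,…,x_{2r}) = ∏_{m=1}^{r} sin(a_m)sin(b_m). -/
noncomputable def Xangle (a b : ℕ → ℝ) (r : ℕ) : ℝ :=
  ∏ m ∈ Finset.Icc 1 r, (Real.sin (a m) * Real.sin (b m))

/-- E(m,s) = m·sin²(s/2) − cos(s/2)^{2m} + sin(s/2). -/
noncomputable def Efun (m : ℕ) (s : ℝ) : ℝ :=
  (m : ℝ) * Real.sin (s / 2) ^ 2 - Real.cos (s / 2) ^ (2 * m) + Real.sin (s / 2)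

/-- G(N,j,x,s) = (N−j−2)·sin²(s/2) − sin(x/2)·cos(s/2)^{2(N−j−2)} + sin(s/2). -/
noncomputable def Gfun (N j : ℕ) (x s : ℝ) : ℝ :=
  ((N - j - 2 : ℕ) : ℝ) * Real.sin (s / 2) ^ 2
    - Real.sin (x / 2) * Real.cos (s / 2) ^ (2 * (N - j - 2)) + Real.sin (s / 2)

/-- The sequence s_N^{(j)}: s_N^{(0)} = inf{s > 0 : E(N−2,s) = 0},
s_N^{(j)} = inf{s > 0 : G(N,j,s_N^{(j−1)},s) = 0}. -/
noncomputable def sSeq (N : ℕ) : ℕ → ℝ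
  | 0 => sInf {s : ℝ | 0 < s ∧ Efun (N - 2) s = 0}
  | j + 1 => sInf {s : ℝ | 0 < s ∧ Gfun N (j + 1) (sSeq N j) s = 0}

/-- s is N-good: for all x₁,…,x_{2(N−2)} ∈ I_s,
I_s ⊆ α_{N−1,N}({x₁}×⋯×{x_{2(N−2)}}×(0,π)). -/
def NGood (N : ℕ) (s : ℝ) : Prop :=
  ∀ a b : ℕ → ℝ, (∀ m ∈ Finset.Icc 1 (N - 2), a m ∈ Iset s ∧ b m ∈ Iset s) →
    ∀ y ∈ Iset s, ∃ φ ∈ Set.Ioo (0 : ℝ) Real.pi,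
      Real.arccos (Fangle a b (N - 2) + Real.cos φ * Xangle a b (N - 2)) = y

/-- s is (N,j)-good: for all x₁,…,x_{2(N−j−2)} ∈ I_s,
I_s ⊆ α_{N−j−1,N−j}({x₁}×⋯×{x_{2(N−j−2)}}×I_{s_N^{(j−1)}}). -/
def NjGood (N j : ℕ) (s : ℝ) : Prop :=
  ∀ a b : ℕ → ℝ, (∀ m ∈ Finset.Icc 1 (N - j - 2), a m ∈ Iset s ∧ b m ∈ Iset s) →
    ∀ y ∈ Iset s, ∃ φ ∈ Iset (sSeq N (j - 1)),
      Real.arccos (Fangle a b (N - j - 2) + Real.cos φ * Xangle a b (N - j - 2)) = y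

set_option maxHeartbeats 2000000 in
/-- for N large, every 0 < s ≤ (1/(N−2))(−1/2 + √(1/4 + 2(N−2))) is N-good. -/
theorem NGood_of_le_quadratic_root :
    ∃ N₀ : ℕ, ∀ N : ℕ, N₀ ≤ N → ∀ s : ℝ, 0 < s →
      s ≤ 1 / ((N : ℝ) - 2) * (-(1 : ℝ) / 2 + Real.sqrt (1 / 4 + 2 * ((N : ℝ) - 2))) →
      NGood N s := by
  refine ⟨11, fun N hN s hs hsle => ?_⟩
  set r : ℕ := N - 2 with hr
  have hr9 : 9 ≤ r := by omega
  have hrR : ((N : ℝ) - 2) = (r : ℝ) := by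
    have : (2 : ℕ) ≤ N := by omega
    push_cast [hr, Nat.cast_sub this]; ring
  have hrpos : (0 : ℝ) < (r : ℝ) := by positivity
  have hr9R : (9 : ℝ) ≤ (r : ℝ) := by exact_mod_cast hr9
  set q : ℝ := Real.sqrt (1 / 4 + 2 * ((N : ℝ) - 2)) with hq
  have hq0 : 0 ≤ q := Real.sqrt_nonneg _
  have hq2 : q ^ 2 = 1 / 4 + 2 * (r : ℝ) := by
    rw [hq, Real.sq_sqrt (by rw [hrR]; positivity), hrR]
  -- key: r * s ≤ -1/2 + q
  have h1 : (r : ℝ) * s ≤ -1 / 2 + q := by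
    rw [hrR] at hsle
    have := mul_le_mul_of_nonneg_left hsle hrpos.le
    rw [← mul_assoc, mul_one_div, div_self hrpos.ne', one_mul] at this
    linarith
  -- key inequality : 2 r (s/2)^2 + s/2 ≤ 1
  have hkey : 2 * (r : ℝ) * (s / 2) ^ 2 + s / 2 ≤ 1 := by
    nlinarith [mul_le_mul_of_nonneg_left h1 hs.le, sq_nonneg s, sq_nonneg (q - 1/2)]
  have hs1 : s < 1 := by nlinarith [sq_nonneg s]
  have hpi : (3 : ℝ) < Real.pi := Real.pi_gt_three
  have hu0 : 0 < s / 2 := by linarith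
  set t : ℝ := Real.sin (s / 2) with htdef
  set c : ℝ := Real.cos (s / 2) with hcdef
  have ht0 : 0 < t := Real.sin_pos_of_pos_of_lt_pi hu0 (by linarith)
  have htu : t < s / 2 := Real.sin_lt hu0
  have hc0 : 0 ≤ c := Real.cos_nonneg_of_mem_Icc ⟨by linarith, by linarith⟩
  have hc2 : c ^ 2 = 1 - t ^ 2 := Real.cos_sq' (s / 2)
  -- strict key inequality
  have ht2 : t ^ 2 < (s / 2) ^ 2 := by nlinarith
  have hkey2 : (r : ℝ) * t ^ 2 + t < 1 - (r : ℝ) * t ^ 2 := by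
    nlinarith [mul_lt_mul_of_pos_left ht2 hrpos]
  -- Bernoulli
  have hb : 1 - (r : ℝ) * t ^ 2 ≤ (1 - t ^ 2) ^ r := by
    have h2 : (-2 : ℝ) ≤ -t ^ 2 := by nlinarith
    have := one_add_mul_le_pow h2 r
    have e1 : (1 : ℝ) + -t ^ 2 = 1 - t ^ 2 := by ring
    have e2 : (1 : ℝ) + (r : ℝ) * -t ^ 2 = 1 - (r : ℝ) * t ^ 2 := by ring
    rwa [e1, e2] at this
  -- bounds on cos and sin over Iset s
  have hcosb : ∀ x ∈ Iset s, |Real.cos x| ≤ t := by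
    intro x hx
    obtain ⟨hx1, hx2⟩ := hx
    rw [abs_le]
    constructor
    · have h := Real.cos_le_cos_of_nonneg_of_le_pi (by linarith : (0:ℝ) ≤ x)
        (by linarith : (Real.pi + s) / 2 ≤ Real.pi) hx2
      have e : (Real.pi + s) / 2 = Real.pi / 2 - -(s / 2) := by ring
      rw [e, Real.cos_pi_div_two_sub, Real.sin_neg] at h
      linarith
    · have h := Real.cos_le_cos_of_nonneg_of_le_pi (by linarith : (0:ℝ) ≤ (Real.pi - s) / 2)
        (by linarith : x ≤ Real.pi) hx1
      have e : (Real.pi - s) / 2 = Real.pi / 2 - s / 2 := by ring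
      rw [e, Real.cos_pi_div_two_sub] at h
      exact h
  have hsinb : ∀ x ∈ Iset s, c ≤ Real.sin x := by
    intro x hx
    obtain ⟨hx1, hx2⟩ := hx
    have habs : |Real.pi / 2 - x| ≤ s / 2 := by
      rw [abs_le]; constructor <;> linarith
    have h := Real.cos_le_cos_of_nonneg_of_le_pi (abs_nonneg (Real.pi / 2 - x))
      (by linarith : s / 2 ≤ Real.pi) habs
    rw [Real.cos_abs, Real.cos_pi_div_two_sub] at h
    exact h
  -- main body
  intro a b hab y hy
  have hFb : |Fangle a b r| ≤ (r : ℝ) * t ^ 2 := by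
    rw [Fangle]
    calc |∑ m ∈ Finset.Icc 1 r, Real.cos (a m) * Real.cos (b m) *
          ∏ l ∈ Finset.Icc 1 (m - 1), (Real.sin (a l) * Real.sin (b l))|
        ≤ ∑ m ∈ Finset.Icc 1 r, |Real.cos (a m) * Real.cos (b m) *
          ∏ l ∈ Finset.Icc 1 (m - 1), (Real.sin (a l) * Real.sin (b l))| :=
          Finset.abs_sum_le_sum_abs _ _
      _ ≤ ∑ m ∈ Finset.Icc 1 r, t ^ 2 := by
          apply Finset.sum_le_sum
          intro m hm
          rw [abs_mul, abs_mul]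
          have h1 : |Real.cos (a m)| ≤ t := hcosb _ (hab m hm).1
          have h2 : |Real.cos (b m)| ≤ t := hcosb _ (hab m hm).2
          have h3 : |∏ l ∈ Finset.Icc 1 (m - 1), (Real.sin (a l) * Real.sin (b l))| ≤ 1 := by
            rw [Finset.abs_prod]
            apply Finset.prod_le_one
            · intro l _; positivity
            · intro l _
              rw [abs_mul]
              exact mul_le_one₀ (Real.abs_sin_le_one _) (abs_nonneg _) (Real.abs_sin_le_one _)
          calc |Real.cos (a m)| * |Real.cos (b m)| * |∏ l ∈ Finset.Icc 1 (m - 1),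
                (Real.sin (a l) * Real.sin (b l))|
              ≤ t * t * 1 := by
                apply mul_le_mul _ h3 (abs_nonneg _) (by positivity)
                exact mul_le_mul h1 h2 (abs_nonneg _) ht0.le
            _ = t ^ 2 := by ring
      _ = (r : ℝ) * t ^ 2 := by
          rw [Finset.sum_const, Nat.card_Icc]; simp [nsmul_eq_mul]
  have hXb : (1 - t ^ 2) ^ r ≤ Xangle a b r := by
    rw [Xangle]
    have : (1 - t ^ 2) ^ r = ∏ _m ∈ Finset.Icc 1 r, c ^ 2 := by
      rw [Finset.prod_const, Nat.card_Icc, hc2]; simp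
    rw [this]
    apply Finset.prod_le_prod
    · intro m _; positivity
    · intro m hm
      have h1 : c ≤ Real.sin (a m) := hsinb _ (hab m hm).1
      have h2 : c ≤ Real.sin (b m) := hsinb _ (hab m hm).2
      calc c ^ 2 = c * c := sq c
        _ ≤ Real.sin (a m) * Real.sin (b m) := mul_le_mul h1 h2 hc0 (hc0.trans h1)
  have hXpos : 0 < Xangle a b r := by nlinarith [abs_nonneg (Fangle a b r)]
  have hyI : |Real.cos y| ≤ t := hcosb y hy
  have hnum : |Real.cos y - Fangle a b r| < Xangle a b r := by
    calc |Real.cos y - Fangle a b r| ≤ |Real.cos y| + |Fangle a b r| := abs_sub _ _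
      _ ≤ t + (r : ℝ) * t ^ 2 := add_le_add hyI hFb
      _ < 1 - (r : ℝ) * t ^ 2 := by linarith
      _ ≤ (1 - t ^ 2) ^ r := hb
      _ ≤ Xangle a b r := hXb
  set z : ℝ := (Real.cos y - Fangle a b r) / Xangle a b r with hz
  have hzabs : |z| < 1 := by
    rw [hz, abs_div, abs_of_pos hXpos, div_lt_one hXpos]
    exact hnum
  have hz1 : z < 1 := (abs_lt.1 hzabs).2
  have hz2 : -1 < z := (abs_lt.1 hzabs).1
  refine ⟨Real.arccos z, ⟨Real.arccos_pos.2 hz1, ?_⟩, ?_⟩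
  · exact lt_of_le_of_ne (Real.arccos_le_pi z)
      (fun h => absurd (Real.arccos_eq_pi.1 h) (not_le.2 hz2))
  · rw [Real.cos_arccos hz2.le hz1.le, hz, div_mul_cancel₀ _ hXpos.ne', add_sub_cancel]
    obtain ⟨hy1, hy2⟩ := hy
    exact Real.arccos_cos (by linarith) (by linarith)
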